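/- Let A be an arrangement of 12 distinct lines in P^2(C) all of whose multiple points have multiplicity at most 5, having at least one quadruple point. If A admits a non-constant 3-cocycle η : A → F_3, then A is a (3,4)-net, i.e. A admits a partition into three classes of four lines each such that whenever two lines from different classes meet, their intersection point lies on exactly one line from each of the three classes. -/

import Mathlib

open scoped Classical

noncomputable section

/-- The complex projective plane `P²(ℂ)`. -/
abbrev ProjPlane : Type := Projectivization ℂ (Fin 3 → ℂ)

/-- A subset of `P²(ℂ)` is a projective line if it is the zero locus of a nonzero
linear form. -/
def IsProjLine (S : Set ProjPlane) : Prop :=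
  ∃ f : (Fin 3 → ℂ) →ₗ[ℂ] ℂ, f ≠ 0 ∧ S = {p : ProjPlane | f p.rep = 0}

/-- The lines of the arrangement `A` passing through the point `p`. -/
def linesThrough (A : Finset (Set ProjPlane)) (p : ProjPlane) : Finset (Set ProjPlane) :=
  A.filter fun L => p ∈ L

/-- The multiplicity of a point `p` with respect to the arrangement `A`. -/
def mult (A : Finset (Set ProjPlane)) (p : ProjPlane) : ℕ :=
  (linesThrough A p).card

/-- `p` is a multiple point of the arrangement `A` (at least two lines pass through it). -/
def IsMultPoint (A : Finset (Set ProjPlane)) (p : ProjPlane) : Prop :=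
  2 ≤ mult A p

/-- A `q`-cocycle of the line arrangement `A`: for every multiple point `p`,
if `q` divides the multiplicity then the values of `η` on the lines through `p` sum to `0`,
and otherwise `η` is constant on the lines through `p`. -/
def IsCocycle (q : ℕ) (A : Finset (Set ProjPlane)) (η : Set ProjPlane → ZMod q) : Prop :=
  ∀ p : ProjPlane, IsMultPoint A p →
    ((q ∣ mult A p → ∑ L ∈ linesThrough A p, η L = 0) ∧
     (¬ q ∣ mult A p → ∀ L ∈ linesThrough A p, ∀ K ∈ linesThrough A p, η L = η K))

/-- A function on lines is non-constant on the arrangement `A`. -/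
def NonConstant {α : Type*} (A : Finset (Set ProjPlane)) (η : Set ProjPlane → α) : Prop :=
  ∃ L ∈ A, ∃ K ∈ A, η L ≠ η K

/-- A `(k,q)`-net structure on the line arrangement `A`, with classes `C 0, …, C (k-1)`:
the classes partition `A` into `k` classes of `q` lines each, and whenever two lines from
different classes meet, their intersection point lies on exactly one line of each class. -/
def IsNet (k q : ℕ) (A : Finset (Set ProjPlane)) (C : Fin k → Finset (Set ProjPlane)) : Prop :=
  (∀ L ∈ A, IsProjLine L) ∧
  A.card = k * q ∧
  (∀ i, (C i).card = q) ∧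
  (∀ i j, i ≠ j → Disjoint (C i) (C j)) ∧
  (∀ i, C i ⊆ A) ∧
  (∀ L ∈ A, ∃ i, L ∈ C i) ∧
  (∀ i j, i ≠ j → ∀ L ∈ C i, ∀ K ∈ C j, ∀ p : ProjPlane, p ∈ L → p ∈ K →
    ∀ m : Fin k, ∃! N, N ∈ C m ∧ p ∈ N)

/-- Lattice isomorphism of two line arrangements: a bijection between the lines such that
a subfamily of lines has a common point iff the image subfamily has a common point. -/
def LatticeIso (A B : Finset (Set ProjPlane)) : Prop :=
  ∃ φ : Set ProjPlane → Set ProjPlane, Set.BijOn φ ↑A ↑B ∧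
    ∀ S : Finset (Set ProjPlane), S ⊆ A →
      ((∃ p : ProjPlane, ∀ L ∈ S, p ∈ L) ↔ ∃ p : ProjPlane, ∀ L ∈ S, p ∈ φ L)

/-- The projective line with homogeneous equation `a·x + b·y + c·z = 0`. -/
def lineOf (a b c : ℂ) : Set ProjPlane :=
  {p : ProjPlane | a * p.rep 0 + b * p.rep 1 + c * p.rep 2 = 0}

lemma aux_mem_line {f : (Fin 3 → ℂ) →ₗ[ℂ] ℂ} {v : Fin 3 → ℂ} (hv : v ≠ 0) (h : f v = 0) :
    f (Projectivization.mk ℂ v hv).rep = 0 := by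
  obtain ⟨a, ha⟩ := Projectivization.exists_smul_eq_mk_rep ℂ v hv
  rw [← ha, Units.smul_def, map_smul, h, smul_zero]

lemma lines_intersect {L K : Set ProjPlane} (hL : IsProjLine L) (hK : IsProjLine K) :
    ∃ p : ProjPlane, p ∈ L ∧ p ∈ K := by
  obtain ⟨f, hf, rfl⟩ := hL
  obtain ⟨g, hg, rfl⟩ := hK
  have hker : ∀ h : (Fin 3 → ℂ) →ₗ[ℂ] ℂ, h ≠ 0 →
      Module.finrank ℂ (LinearMap.ker h) = 2 := by
    intro h hh
    have := Module.Dual.finrank_ker_add_one_of_ne_zero (f := h) hh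
    simp only [Module.finrank_fin_fun] at this
    omega
  have h1 : Module.finrank ℂ (LinearMap.ker f ⊓ LinearMap.ker g : Submodule ℂ (Fin 3 → ℂ)) ≥ 1 := by
    have hsum := Submodule.finrank_sup_add_finrank_inf_eq (LinearMap.ker f) (LinearMap.ker g)
    have hsup : Module.finrank ℂ (LinearMap.ker f ⊔ LinearMap.ker g : Submodule ℂ (Fin 3 → ℂ)) ≤ 3 := by
      have := Submodule.finrank_le (LinearMap.ker f ⊔ LinearMap.ker g)
      simpa [Module.finrank_fin_fun] using this
    rw [hker f hf, hker g hg] at hsum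
    omega
  have hne : (LinearMap.ker f ⊓ LinearMap.ker g : Submodule ℂ (Fin 3 → ℂ)) ≠ ⊥ := by
    intro hbot
    rw [hbot] at h1
    simp at h1
  obtain ⟨v, hv, hv0⟩ := Submodule.exists_mem_ne_zero_of_ne_bot hne
  obtain ⟨hvf, hvg⟩ := Submodule.mem_inf.1 hv
  exact ⟨Projectivization.mk ℂ v hv0, aux_mem_line hv0 hvf, aux_mem_line hv0 hvg⟩

lemma unique_intersection {L K : Set ProjPlane} (hL : IsProjLine L) (hK : IsProjLine K)
    (hLK : L ≠ K) {p q : ProjPlane} (hpL : p ∈ L) (hpK : p ∈ K) (hqL : q ∈ L) (hqK : q ∈ K) :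
    p = q := by
  by_contra hpq
  obtain ⟨f, hf, rfl⟩ := hL
  obtain ⟨g, hg, rfl⟩ := hK
  -- p.rep and q.rep are linearly independent
  have hind : LinearIndependent ℂ ![p.rep, q.rep] := by
    rw [LinearIndependent.pair_iff' p.rep_nonzero]
    intro a ha
    apply hpq
    have ha0 : a ≠ 0 := by
      rintro rfl
      exact q.rep_nonzero (by simpa using ha.symm)
    have : Projectivization.mk ℂ p.rep p.rep_nonzero = Projectivization.mk ℂ q.rep q.rep_nonzero := by
      rw [Projectivization.mk_eq_mk_iff']
      exact ⟨a⁻¹, by rw [← ha, smul_smul, inv_mul_cancel₀ ha0, one_smul]⟩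
    simpa [Projectivization.mk_rep] using this
  have hspan : ∀ h : (Fin 3 → ℂ) →ₗ[ℂ] ℂ, h ≠ 0 → h p.rep = 0 → h q.rep = 0 →
      LinearMap.ker h = Submodule.span ℂ (Set.range ![p.rep, q.rep]) := by
    intro h hh h1 h2
    have hle : Submodule.span ℂ (Set.range ![p.rep, q.rep]) ≤ LinearMap.ker h := by
      rw [Submodule.span_le]
      rintro x ⟨i, rfl⟩
      fin_cases i <;> simpa [LinearMap.mem_ker]
    refine (Submodule.eq_of_le_of_finrank_le hle ?_).symm
    rw [finrank_span_eq_card hind]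
    have := Module.Dual.finrank_ker_add_one_of_ne_zero (f := h) hh
    simp only [Module.finrank_fin_fun] at this
    simp only [Fintype.card_fin]
    omega
  apply hLK
  have := (hspan f hf hpL hqL).trans (hspan g hg hpK hqK).symm
  ext x
  simp only [Set.mem_setOf_eq, ← LinearMap.mem_ker, this]

lemma mixed_point {A : Finset (Set ProjPlane)}
    (hmult : ∀ p : ProjPlane, IsMultPoint A p → mult A p ≤ 5)
    {η : Set ProjPlane → ZMod 3} (hη : IsCocycle 3 A η)
    {L K : Set ProjPlane} {p : ProjPlane} (hL : L ∈ A) (hK : K ∈ A) (hne : η L ≠ η K)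
    (hpL : p ∈ L) (hpK : p ∈ K) :
    ∀ z : ZMod 3, ∃! M, M ∈ linesThrough A p ∧ η M = z := by
  have hLS : L ∈ linesThrough A p := Finset.mem_filter.2 ⟨hL, hpL⟩
  have hKS : K ∈ linesThrough A p := Finset.mem_filter.2 ⟨hK, hpK⟩
  have hLK : L ≠ K := fun h => hne (by rw [h])
  have hmp : IsMultPoint A p := Finset.one_lt_card.2 ⟨L, hLS, K, hKS, hLK⟩
  have hdvd : (3 : ℕ) ∣ mult A p := by
    by_contra hd
    exact hne ((hη p hmp).2 hd L hLS K hKS)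
  have hcard : mult A p = 3 := by
    obtain ⟨k, hk⟩ := hdvd
    have h5 := hmult p hmp
    have h2 := hmp
    unfold IsMultPoint at h2
    omega
  have hcard' : (linesThrough A p).card = 3 := hcard
  have hsum : ∑ M ∈ linesThrough A p, η M = 0 := (hη p hmp).1 hdvd
  -- injectivity of η on linesThrough A p
  have hinj : Set.InjOn η (linesThrough A p : Set (Set ProjPlane)) := by
    rintro x hx y hy hxy
    by_contra hxyne
    have hsub : {x, y} ⊆ linesThrough A p := by
      intro t ht
      rcases Finset.mem_insert.1 ht with rfl | ht
      · exact hx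
      · rwa [Finset.mem_singleton.1 ht]
    have hxy2 : ({x, y} : Finset (Set ProjPlane)).card = 2 := Finset.card_pair hxyne
    have hsd : (linesThrough A p \ {x, y}).card = 1 := by
      rw [Finset.card_sdiff_of_subset hsub, hxy2, hcard']
    obtain ⟨w, hw⟩ := Finset.card_eq_one.1 hsd
    have hwmem : w ∈ linesThrough A p \ ({x, y} : Finset (Set ProjPlane)) := by
      rw [hw]; exact Finset.mem_singleton_self w
    have hwS := (Finset.mem_sdiff.1 hwmem).1
    have hwxy := (Finset.mem_sdiff.1 hwmem).2
    have hwx : w ≠ x := fun h => hwxy (by rw [h]; simp)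
    have hwy : w ≠ y := fun h => hwxy (by rw [h]; simp)
    have hS : linesThrough A p = {x, y, w} := by
      apply Finset.eq_of_subset_of_card_le
      · intro t ht
        by_cases htx : t = x
        · simp [htx]
        by_cases hty : t = y
        · simp [hty]
        have : t ∈ linesThrough A p \ ({x, y} : Finset (Set ProjPlane)) :=
          Finset.mem_sdiff.2 ⟨ht, by simp [htx, hty]⟩
        rw [hw, Finset.mem_singleton] at this
        simp [this]
      · exact Finset.card_le_card (by
          intro t ht
          simp only [Finset.mem_insert, Finset.mem_singleton] at ht
          rcases ht with rfl | rfl | rfl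
          · exact hx
          · exact hy
          · exact hwS)
    have hsum3 : η x + η y + η w = 0 := by
      rw [hS] at hsum
      rw [Finset.sum_insert (by simp [hxyne, hwx.symm]),
        Finset.sum_insert (by simp [hwy.symm]), Finset.sum_singleton] at hsum
      linear_combination (norm := ring_nf) hsum
    have hweq : η w = η x := by
      have : ∀ u v : ZMod 3, u + u + v = 0 → v = u := by decide
      rw [← hxy] at hsum3
      exact this _ _ hsum3
    -- η constant on S, contradiction with η L ≠ η K
    have hconst : ∀ t ∈ linesThrough A p, η t = η x := by
      intro t ht
      rw [hS] at ht
      simp only [Finset.mem_insert, Finset.mem_singleton] at ht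
      rcases ht with rfl | rfl | rfl
      · rfl
      · exact hxy.symm
      · exact hweq
    exact hne ((hconst L hLS).trans (hconst K hKS).symm)
  have himg : (linesThrough A p).image η = Finset.univ := by
    apply Finset.eq_univ_of_card
    rw [Finset.card_image_of_injOn hinj, hcard']
    rfl
  intro z
  have hz : z ∈ (linesThrough A p).image η := by rw [himg]; exact Finset.mem_univ z
  obtain ⟨M, hM, hMz⟩ := Finset.mem_image.1 hz
  exact ⟨M, ⟨hM, hMz⟩, fun N ⟨hN, hNz⟩ => hinj hN hM (hNz.trans hMz.symm)⟩

lemma class_card {A : Finset (Set ProjPlane)} (hlines : ∀ L ∈ A, IsProjLine L)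
    (hmult : ∀ p : ProjPlane, IsMultPoint A p → mult A p ≤ 5)
    {η : Set ProjPlane → ZMod 3} (hη : IsCocycle 3 A η)
    {L₀ : Set ProjPlane} (hL₀A : L₀ ∈ A) {b c : ZMod 3}
    (hab : η L₀ ≠ b) (hac : η L₀ ≠ c) :
    (A.filter fun L => η L = b).card = (A.filter fun L => η L = c).card := by
  have hint : ∀ K ∈ A.filter fun L => η L = b, ∃ q : ProjPlane, q ∈ L₀ ∧ q ∈ K :=
    fun K hK => lines_intersect (hlines _ hL₀A) (hlines _ (Finset.mem_filter.1 hK).1)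
  choose pt hpt1 hpt2 using hint
  have hMP : ∀ K (hK : K ∈ A.filter fun L => η L = b),
      ∃! M, M ∈ linesThrough A (pt K hK) ∧ η M = c := by
    intro K hK
    obtain ⟨hKA, hKb⟩ := Finset.mem_filter.1 hK
    exact mixed_point hmult hη hL₀A hKA (by rw [hKb]; exact hab) (hpt1 K hK) (hpt2 K hK) c
  choose Mf hMf hMuniq using hMP
  apply Finset.card_bij (fun K hK => Mf K hK)
  · intro K hK
    obtain ⟨hMlt, hMc⟩ := hMf K hK
    exact Finset.mem_filter.2 ⟨(Finset.mem_filter.1 hMlt).1, hMc⟩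
  · intro K₁ hK₁ K₂ hK₂ heq
    obtain ⟨hM1lt, hM1c⟩ := hMf K₁ hK₁
    obtain ⟨hM2lt, hM2c⟩ := hMf K₂ hK₂
    rw [heq] at hM1lt
    set N := Mf K₂ hK₂ with hN
    have hNA : N ∈ A := (Finset.mem_filter.1 hM2lt).1
    have hNL₀ : L₀ ≠ N := fun h => hac (by rw [h]; exact hM2c)
    have hp12 : pt K₁ hK₁ = pt K₂ hK₂ :=
      unique_intersection (hlines _ hL₀A) (hlines _ hNA) hNL₀
        (hpt1 K₁ hK₁) (Finset.mem_filter.1 hM1lt).2 (hpt1 K₂ hK₂) (Finset.mem_filter.1 hM2lt).2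
    obtain ⟨hK₁A, hK₁b⟩ := Finset.mem_filter.1 hK₁
    obtain ⟨hK₂A, hK₂b⟩ := Finset.mem_filter.1 hK₂
    have huniq := mixed_point hmult hη hL₀A hK₁A (by rw [hK₁b]; exact hab)
      (hpt1 K₁ hK₁) (hpt2 K₁ hK₁) b
    obtain ⟨W, -, hW⟩ := huniq
    have e1 : K₁ = W := hW K₁ ⟨Finset.mem_filter.2 ⟨hK₁A, hpt2 K₁ hK₁⟩, hK₁b⟩
    have e2 : K₂ = W := hW K₂ ⟨Finset.mem_filter.2 ⟨hK₂A, by rw [hp12]; exact hpt2 K₂ hK₂⟩, hK₂b⟩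
    rw [e1, e2]
  · intro N hN
    obtain ⟨hNA, hNc⟩ := Finset.mem_filter.1 hN
    obtain ⟨q, hqL₀, hqN⟩ := lines_intersect (hlines _ hL₀A) (hlines _ hNA)
    obtain ⟨K, ⟨hKlt, hKb⟩, -⟩ :=
      mixed_point hmult hη hL₀A hNA (by rw [hNc]; exact hac) hqL₀ hqN b
    obtain ⟨hKA, hqK⟩ := Finset.mem_filter.1 hKlt
    have hK : K ∈ A.filter fun L => η L = b := Finset.mem_filter.2 ⟨hKA, hKb⟩
    refine ⟨K, hK, ?_⟩
    have hL₀K : L₀ ≠ K := fun h => hab (by rw [h]; exact hKb)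
    have hpq : pt K hK = q :=
      unique_intersection (hlines _ hL₀A) (hlines _ hKA) hL₀K
        (hpt1 K hK) (hpt2 K hK) hqL₀ hqK
    exact (hMuniq K hK N ⟨Finset.mem_filter.2 ⟨hNA, by rw [hpq]; exact hqN⟩, hNc⟩).symm


lemma zmod3_third : ∀ a b : ZMod 3, a ≠ b → a ≠ -a - b ∧ b ≠ -a - b := by decide

lemma zmod3_cases : ∀ a b c z : ZMod 3, a ≠ b → a ≠ c → b ≠ c → (z = a ∨ z = b ∨ z = c) := by
  decide

theorem statement16' (A : Finset (Set ProjPlane))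
    (hlines : ∀ L ∈ A, IsProjLine L) (hcard : A.card = 12)
    (hmult : ∀ p : ProjPlane, IsMultPoint A p → mult A p ≤ 5)
    (hquad : ∃ p : ProjPlane, mult A p = 4)
    (η : Set ProjPlane → ZMod 3) (hη : IsCocycle 3 A η) (hnc : NonConstant A η) :
    ∃ C : Fin 3 → Finset (Set ProjPlane), IsNet 3 4 A C := by
  obtain ⟨L₁, hL₁A, K₁, hK₁A, hne⟩ := hnc
  set a := η L₁ with ha
  set b := η K₁ with hb
  set c : ZMod 3 := -a - b with hc
  have h_ab : a ≠ b := hne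
  have h_ac : a ≠ c := hc ▸ (zmod3_third a b hne).1
  have h_bc : b ≠ c := hc ▸ (zmod3_third a b hne).2
  -- the three class cardinalities are equal
  have e1 : (A.filter fun L => η L = b).card = (A.filter fun L => η L = c).card :=
    class_card hlines hmult hη hL₁A (by rw [← ha]; exact h_ab) (by rw [← ha]; exact h_ac)
  have e2 : (A.filter fun L => η L = a).card = (A.filter fun L => η L = c).card :=
    class_card hlines hmult hη hK₁A (by rw [← hb]; exact fun h => h_ab h.symm)
      (by rw [← hb]; exact h_bc)
  -- every value is a, b or c
  have hval : ∀ z : ZMod 3, z = a ∨ z = b ∨ z = c := fun z => zmod3_cases a b c z h_ab h_ac h_bc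
  -- the partition sum
  have huniv : (Finset.univ : Finset (ZMod 3)) = {a, b, c} := by
    symm
    apply Finset.eq_univ_of_card
    rw [Finset.card_insert_of_notMem (by simp [h_ab, h_ac]),
      Finset.card_insert_of_notMem (by simp [h_bc]), Finset.card_singleton]
    rfl
  have hsum : A.card = ∑ z ∈ ({a, b, c} : Finset (ZMod 3)), (A.filter fun L => η L = z).card := by
    rw [← huniv]
    exact Finset.card_eq_sum_card_fiberwise (fun L _ => Finset.mem_univ (η L))
  rw [Finset.sum_insert (by simp [h_ab, h_ac]), Finset.sum_insert (by simp [h_bc]),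
    Finset.sum_singleton, hcard] at hsum
  have hfour : ∀ z : ZMod 3, (A.filter fun L => η L = z).card = 4 := by
    have h4c : (A.filter fun L => η L = c).card = 4 := by omega
    intro z
    rcases hval z with rfl | rfl | rfl
    · omega
    · omega
    · exact h4c
  -- the classes
  set v : Fin 3 → ZMod 3 := ![a, b, c] with hv
  have hvinj : ∀ i j : Fin 3, i ≠ j → v i ≠ v j := by
    intro i j hij
    fin_cases i <;> fin_cases j <;>
      simp_all [hv] <;> first | exact h_ab | exact h_ac | exact h_bc |
        exact fun h => h_ab h.symm | exact fun h => h_ac h.symm | exact fun h => h_bc h.symm |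
          exact fun h => hne h.symm
  refine ⟨fun i => A.filter fun L => η L = v i, hlines, by rw [hcard], fun i => hfour (v i),
    ?_, fun i => Finset.filter_subset _ _, ?_, ?_⟩
  · intro i j hij
    exact Finset.disjoint_filter.2 fun L _ hLi hLj => hvinj i j hij (hLi ▸ hLj)
  · intro L hL
    rcases hval (η L) with h | h | h
    · exact ⟨0, Finset.mem_filter.2 ⟨hL, by simpa [hv] using h⟩⟩
    · exact ⟨1, Finset.mem_filter.2 ⟨hL, by simpa [hv] using h⟩⟩
    · exact ⟨2, Finset.mem_filter.2 ⟨hL, by simpa [hv] using h⟩⟩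
  · intro i j hij L hLi K hKj p hpL hpK m
    obtain ⟨hLA, hLv⟩ := Finset.mem_filter.1 hLi
    obtain ⟨hKA, hKv⟩ := Finset.mem_filter.1 hKj
    have hnc' : η L ≠ η K := by rw [hLv, hKv]; exact hvinj i j hij
    obtain ⟨N, ⟨hNlt, hNv⟩, hNuniq⟩ := mixed_point hmult hη hLA hKA hnc' hpL hpK (v m)
    obtain ⟨hNA, hpN⟩ := Finset.mem_filter.1 hNlt
    refine ⟨N, ⟨Finset.mem_filter.2 ⟨hNA, hNv⟩, hpN⟩, ?_⟩
    rintro N' ⟨hN'm, hpN'⟩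
    obtain ⟨hN'A, hN'v⟩ := Finset.mem_filter.1 hN'm
    exact hNuniq N' ⟨Finset.mem_filter.2 ⟨hN'A, hpN'⟩, hN'v⟩


/-- an arrangement of 12 lines with points of multiplicity at most 5, with
at least one quadruple point, admitting a non-constant 3-cocycle, is a (3,4)-net. -/
theorem statement16 (A : Finset (Set ProjPlane))
    (hlines : ∀ L ∈ A, IsProjLine L) (hcard : A.card = 12)
    (hmult : ∀ p : ProjPlane, IsMultPoint A p → mult A p ≤ 5)
    (hquad : ∃ p : ProjPlane, mult A p = 4)
    (η : Set ProjPlane → ZMod 3) (hη : IsCocycle 3 A η) (hnc : NonConstant A η) :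
    ∃ C : Fin 3 → Finset (Set ProjPlane), IsNet 3 4 A C :=
  statement16' A hlines hcard hmult hquad η hη hnc
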